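/- A finite poset (S, <) is width-extensible if and only if for every antichain A of S with |A| ≤ 2 there exists a width-antichain W of S with A ⊆ W. -/

import Mathlib

open scoped Classical

/-- Two elements of a poset are *incomparable*: they are distinct and neither
is strictly below the other. -/
def Incomp {α : Type*} [PartialOrder α] (a b : α) : Prop :=
  a ≠ b ∧ ¬ a < b ∧ ¬ b < a

/-- A finset is an *antichain*: its elements are pairwise incomparable. -/
def IsAC {α : Type*} [PartialOrder α] (A : Finset α) : Prop :=
  ∀ a ∈ A, ∀ b ∈ A, a ≠ b → Incomp a b

/-- The *width* of a finite poset: the maximum cardinality of an antichain. -/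
noncomputable def posetWidth (α : Type*) [PartialOrder α] [Fintype α] : ℕ :=
  sSup {c : ℕ | ∃ A : Finset α, IsAC A ∧ A.card = c}

/-- A *width-antichain*: an antichain whose cardinality equals the width. -/
def IsWidthAC {α : Type*} [PartialOrder α] [Fintype α] (A : Finset α) : Prop :=
  IsAC A ∧ A.card = posetWidth α

/-- A finite poset is *width-extensible* if every antichain is contained in
some width-antichain. -/
def WidthExtensible (α : Type*) [PartialOrder α] [Fintype α] : Prop :=
  ∀ A : Finset α, IsAC A → ∃ W : Finset α, IsWidthAC W ∧ A ⊆ W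

/-- An *indexed chain partition* of a poset `α` into `n` chains: numbers
`m i` and maps `c i : {0,…,m i} → α` which are strictly order-preserving
(hence injective), have pairwise disjoint images, and jointly cover `α`. -/
structure ChainPartition (α : Type*) [PartialOrder α] (n : ℕ) where
  m : Fin n → ℕ
  c : Fin n → ℕ → α
  mono : ∀ i : Fin n, ∀ k l : ℕ, k < l → l ≤ m i → c i k < c i l
  disj : ∀ i j : Fin n, i ≠ j → ∀ k l : ℕ, k ≤ m i → l ≤ m j → c i k ≠ c j l
  cover : ∀ x : α, ∃ i : Fin n, ∃ k : ℕ, k ≤ m i ∧ c i k = x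

/-- Condition ω₁ : all initial states are pairwise incomparable. -/
def ChainPartition.Om1 {α : Type*} [PartialOrder α] {n : ℕ} (P : ChainPartition α n) : Prop :=
  ∀ i j : Fin n, i ≠ j → Incomp (P.c i 0) (P.c j 0)

/-- Condition ω₂ : all final states are pairwise incomparable. -/
def ChainPartition.Om2 {α : Type*} [PartialOrder α] {n : ℕ} (P : ChainPartition α n) : Prop :=
  ∀ i j : Fin n, i ≠ j → Incomp (P.c i (P.m i)) (P.c j (P.m j))

/-- Condition ω₃ : if `[i,s] < [j,t]` and `[j,t-1] < [k,u]` then `[i,s] < [k,u]`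
(for `i ≠ j`, `j ≠ k`, `1 ≤ t`). -/
def ChainPartition.Om3 {α : Type*} [PartialOrder α] {n : ℕ} (P : ChainPartition α n) : Prop :=
  ∀ i j k : Fin n, i ≠ j → j ≠ k →
    ∀ s t u : ℕ, 1 ≤ t → s ≤ P.m i → t ≤ P.m j → u ≤ P.m k →
      P.c i s < P.c j t → P.c j (t - 1) < P.c k u → P.c i s < P.c k u

/-- Condition ψ : if `[i,s-1] < [j,t]` then `¬([j,t-1] < [i,s])`
(for `i ≠ j`, `1 ≤ s`, `1 ≤ t`). -/
def ChainPartition.Psi {α : Type*} [PartialOrder α] {n : ℕ} (P : ChainPartition α n) : Prop :=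
  ∀ i j : Fin n, i ≠ j →
    ∀ s t : ℕ, 1 ≤ s → 1 ≤ t → s ≤ P.m i → t ≤ P.m j →
      P.c i (s - 1) < P.c j t → ¬ P.c j (t - 1) < P.c i s

/-- Order on (width-)antichains: `A ≤ B` iff every element of `A` is below
some element of `B`. -/
def ACle {α : Type*} [PartialOrder α] (A B : Finset α) : Prop :=
  ∀ a ∈ A, ∃ b ∈ B, a ≤ b

/-- A finite poset is *interleaving-consistent* if every width-antichain `W`
that is strictly below some width-antichain can be advanced to a
width-antichain `W'` differing from `W` in exactly one element. -/
def InterleavingConsistent (α : Type*) [PartialOrder α] [Fintype α] : Prop :=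
  ∀ W : Finset α, IsWidthAC W →
    (∃ W'' : Finset α, IsWidthAC W'' ∧ ACle W W'' ∧ W ≠ W'') →
    ∃ W' : Finset α, IsWidthAC W' ∧ ACle W W' ∧ W ≠ W' ∧ (W ∩ W').card = W.card - 1


set_option linter.unusedSectionVars false

section Aux

variable {α : Type*} [PartialOrder α] [Fintype α]

private lemma acSet_bdd : BddAbove {c : ℕ | ∃ A : Finset α, IsAC A ∧ A.card = c} :=
  ⟨Fintype.card α, by rintro c ⟨A, -, rfl⟩; exact Finset.card_le_univ A⟩

private lemma card_le_width {A : Finset α} (hA : IsAC A) : A.card ≤ posetWidth α :=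
  le_csSup acSet_bdd ⟨A, hA, rfl⟩

private lemma not_lt_of_acs {U : Finset α} (hU : IsAC U) {x y : α}
    (hx : x ∈ U) (hy : y ∈ U) : ¬ y < x := by
  rcases eq_or_ne y x with rfl | h
  · exact lt_irrefl y
  · exact (hU y hy x hx h).2.1

private lemma widthAC_dominating {W : Finset α} (hW : IsWidthAC W) (x : α) :
    ∃ w ∈ W, x ≤ w ∨ w ≤ x := by
  by_cases hx : x ∈ W
  · exact ⟨x, hx, Or.inl le_rfl⟩
  by_contra h
  push_neg at h
  have key : ∀ c ∈ W, Incomp x c := by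
    intro c hc
    obtain ⟨h1, h2⟩ := h c hc
    exact ⟨fun hxc => h1 (hxc ▸ le_rfl), fun hlt => h1 hlt.le, fun hlt => h2 hlt.le⟩
  have hins : IsAC (insert x W) := by
    intro a ha b hb hab
    rcases Finset.mem_insert.1 ha with rfl | ha'
    · rcases Finset.mem_insert.1 hb with rfl | hb'
      · exact absurd rfl hab
      · exact key b hb'
    · rcases Finset.mem_insert.1 hb with rfl | hb'
      · obtain ⟨h1, h2, h3⟩ := key a ha'
        exact ⟨fun e => h1 e.symm, h3, h2⟩
      · exact hW.1 a ha' b hb' hab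
  have hle : (insert x W).card ≤ posetWidth α := card_le_width hins
  rw [Finset.card_insert_of_notMem hx, hW.2] at hle
  omega

/-- Meet of two antichains: minimal elements of the union. -/
noncomputable def meetF (U V : Finset α) : Finset α :=
  (U ∪ V).filter (fun x => ∀ y ∈ U ∪ V, ¬ y < x)

/-- Join of two antichains: maximal elements of the union. -/
noncomputable def joinF (U V : Finset α) : Finset α :=
  (U ∪ V).filter (fun x => ∀ y ∈ U ∪ V, ¬ x < y)

private lemma mem_meet_common {U V : Finset α} (hU : IsAC U) (hV : IsAC V) {x : α}
    (hxU : x ∈ U) (hxV : x ∈ V) : x ∈ meetF U V := by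
  simp only [meetF, Finset.mem_filter]
  refine ⟨Finset.mem_union_left _ hxU, fun y hy => ?_⟩
  rcases Finset.mem_union.1 hy with h | h
  · exact not_lt_of_acs hU hxU h
  · exact not_lt_of_acs hV hxV h

private lemma mem_join_common {U V : Finset α} (hU : IsAC U) (hV : IsAC V) {x : α}
    (hxU : x ∈ U) (hxV : x ∈ V) : x ∈ joinF U V := by
  simp only [joinF, Finset.mem_filter]
  refine ⟨Finset.mem_union_left _ hxU, fun y hy hlt => ?_⟩
  rcases Finset.mem_union.1 hy with h | h
  · exact (hU x hxU y h (ne_of_lt hlt)).2.1 hlt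
  · exact (hV x hxV y h (ne_of_lt hlt)).2.1 hlt

private lemma meet_join_widthAC {U V : Finset α} (hU : IsWidthAC U) (hV : IsWidthAC V) :
    IsWidthAC (meetF U V) ∧ IsWidthAC (joinF U V) := by
  have hMn : IsAC (meetF U V) := by
    intro a ha b hb hab
    simp only [meetF, Finset.mem_filter] at ha hb
    exact ⟨hab, hb.2 a ha.1, ha.2 b hb.1⟩
  have hJx : IsAC (joinF U V) := by
    intro a ha b hb hab
    simp only [joinF, Finset.mem_filter] at ha hb
    exact ⟨hab, ha.2 b hb.1, hb.2 a ha.1⟩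
  have hcover : U ∪ V ⊆ meetF U V ∪ joinF U V := by
    intro x hx
    by_cases hm : x ∈ meetF U V
    · exact Finset.mem_union_left _ hm
    · refine Finset.mem_union_right _ ?_
      simp only [meetF, Finset.mem_filter] at hm
      push_neg at hm
      obtain ⟨y, hy, hylt⟩ := hm hx
      simp only [joinF, Finset.mem_filter]
      refine ⟨hx, fun z hz hxz => ?_⟩
      rcases Finset.mem_union.1 hx with hxU | hxV
      · have hyV : y ∈ V := by
          rcases Finset.mem_union.1 hy with h | h
          · exact absurd hylt (not_lt_of_acs hU.1 hxU h)
          · exact h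
        have hzV : z ∈ V := by
          rcases Finset.mem_union.1 hz with h | h
          · exact absurd hxz (not_lt_of_acs hU.1 h hxU)
          · exact h
        exact not_lt_of_acs hV.1 hzV hyV (hylt.trans hxz)
      · have hyU : y ∈ U := by
          rcases Finset.mem_union.1 hy with h | h
          · exact h
          · exact absurd hylt (not_lt_of_acs hV.1 hxV h)
        have hzU : z ∈ U := by
          rcases Finset.mem_union.1 hz with h | h
          · exact h
          · exact absurd hxz (not_lt_of_acs hV.1 h hxV)
        exact not_lt_of_acs hU.1 hzU hyU (hylt.trans hxz)
  have hinter : U ∩ V ⊆ meetF U V ∩ joinF U V := by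
    intro x hx
    obtain ⟨h1, h2⟩ := Finset.mem_inter.1 hx
    exact Finset.mem_inter.2 ⟨mem_meet_common hU.1 hV.1 h1 h2, mem_join_common hU.1 hV.1 h1 h2⟩
  have c1 : (meetF U V).card ≤ posetWidth α := card_le_width hMn
  have c2 : (joinF U V).card ≤ posetWidth α := card_le_width hJx
  have c3 : (U ∪ V).card ≤ (meetF U V ∪ joinF U V).card := Finset.card_le_card hcover
  have c4 : (U ∩ V).card ≤ (meetF U V ∩ joinF U V).card := Finset.card_le_card hinter
  have e1 : (meetF U V ∪ joinF U V).card + (meetF U V ∩ joinF U V).card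
      = (meetF U V).card + (joinF U V).card := Finset.card_union_add_card_inter _ _
  have e2 : (U ∪ V).card + (U ∩ V).card = U.card + V.card := Finset.card_union_add_card_inter _ _
  have hu := hU.2
  have hv := hV.2
  exact ⟨⟨hMn, by omega⟩, ⟨hJx, by omega⟩⟩

private lemma exists_join_above {U V : Finset α} {u : α} (hu : u ∈ U ∪ V) :
    ∃ m ∈ joinF U V, u ≤ m := by
  have hne : ((U ∪ V).filter (fun y => u ≤ y)).Nonempty :=
    ⟨u, Finset.mem_filter.2 ⟨hu, le_rfl⟩⟩
  obtain ⟨m, hm, hmax⟩ : ∃ m ∈ (U ∪ V).filter (fun y => u ≤ y),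
      ∀ x ∈ (U ∪ V).filter (fun y => u ≤ y), ¬ m < x := by
    obtain ⟨m, hm⟩ := Finset.exists_maximal (s := (U ∪ V).filter (fun y => u ≤ y)) hne
    exact ⟨m, hm.prop, fun x hx hlt => lt_irrefl _ (hlt.trans_le (hm.2 hx hlt.le))⟩
  obtain ⟨hm1, hm2⟩ := Finset.mem_filter.1 hm
  refine ⟨m, ?_, hm2⟩
  simp only [joinF, Finset.mem_filter]
  exact ⟨hm1, fun z hz hlt => hmax z (Finset.mem_filter.2 ⟨hz, hm2.trans hlt.le⟩) hlt⟩

private lemma exists_le_of_mem_meet_left {U V : Finset α} (hU : IsWidthAC U) {z : α}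
    (hz : z ∈ meetF U V) : ∃ w ∈ U, z ≤ w := by
  simp only [meetF, Finset.mem_filter] at hz
  obtain ⟨hz1, hz2⟩ := hz
  rcases Finset.mem_union.1 hz1 with h | h
  · exact ⟨z, h, le_rfl⟩
  · obtain ⟨w, hw, hle⟩ := widthAC_dominating hU z
    rcases hle with hle | hle
    · exact ⟨w, hw, hle⟩
    · rcases eq_or_lt_of_le hle with rfl | hlt
      · exact ⟨w, hw, le_rfl⟩
      · exact absurd hlt (hz2 w (Finset.mem_union_left _ hw))

private lemma exists_le_of_mem_meet_right {U V : Finset α} (hV : IsWidthAC V) {z : α}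
    (hz : z ∈ meetF U V) : ∃ w ∈ V, z ≤ w := by
  simp only [meetF, Finset.mem_filter] at hz
  obtain ⟨hz1, hz2⟩ := hz
  rcases Finset.mem_union.1 hz1 with h | h
  · obtain ⟨w, hw, hle⟩ := widthAC_dominating hV z
    rcases hle with hle | hle
    · exact ⟨w, hw, hle⟩
    · rcases eq_or_lt_of_le hle with rfl | hlt
      · exact ⟨w, hw, le_rfl⟩
      · exact absurd hlt (hz2 w (Finset.mem_union_right _ hw))
  · exact ⟨z, h, le_rfl⟩

private lemma join_subset_union {U V : Finset α} : joinF U V ⊆ U ∪ V :=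
  fun _ hz => (Finset.mem_filter.1 hz).1

private lemma sandwich {L M R : Finset α} (hR : IsAC R) {x : α}
    (hxL : x ∈ L) (hxR : x ∈ R)
    (h1 : ∀ z ∈ L, ∃ y ∈ M, z ≤ y) (h2 : ∀ z ∈ M, ∃ y ∈ R, z ≤ y) : x ∈ M := by
  obtain ⟨z, hz, hxz⟩ := h1 x hxL
  obtain ⟨y, hy, hzy⟩ := h2 z hz
  have hxy : x ≤ y := hxz.trans hzy
  have hxey : x = y := by
    by_contra hne
    exact (hR x hxR y hy hne).2.1 (lt_of_le_of_ne hxy hne)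
  have : x = z := le_antisymm hxz (hxey ▸ hzy)
  exact this ▸ hz

end Aux

/-- A finite poset is width-extensible iff every antichain of
size at most two is contained in some width-antichain. -/
theorem widthExtensible_iff_pairs {α : Type*} [PartialOrder α] [Fintype α] :
    WidthExtensible α ↔
      ∀ A : Finset α, IsAC A → A.card ≤ 2 →
        ∃ W : Finset α, IsWidthAC W ∧ A ⊆ W := by
  constructor
  · intro h A hA _
    exact h A hA
  · intro hp
    have key : ∀ n (A : Finset α), IsAC A → A.card = n →
        ∃ W : Finset α, IsWidthAC W ∧ A ⊆ W := by
      intro n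
      induction n using Nat.strong_induction_on with
      | _ n ih =>
        intro A hA hn
        by_cases hle : A.card ≤ 2
        · exact hp A hA hle
        push_neg at hle
        -- pick three distinct elements of A
        obtain ⟨a1, ha1⟩ := Finset.card_pos.mp (by omega : 0 < A.card)
        have hc1 : 0 < (A.erase a1).card := by
          rw [Finset.card_erase_of_mem ha1]; omega
        obtain ⟨a2, ha2'⟩ := Finset.card_pos.mp hc1
        have hc2 : 0 < ((A.erase a1).erase a2).card := by
          rw [Finset.card_erase_of_mem ha2', Finset.card_erase_of_mem ha1]; omega
        obtain ⟨a3, ha3'⟩ := Finset.card_pos.mp hc2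
        obtain ⟨h21, ha2⟩ := Finset.mem_erase.1 ha2'
        obtain ⟨h32, ha3''⟩ := Finset.mem_erase.1 ha3'
        obtain ⟨h31, ha3⟩ := Finset.mem_erase.1 ha3''
        -- the three maximum antichains from the induction hypothesis
        have hsub : ∀ a ∈ A, IsAC (A.erase a) :=
          fun a _ x hx y hy => hA x (Finset.mem_of_mem_erase hx) y (Finset.mem_of_mem_erase hy)
        have hcard : ∀ a ∈ A, (A.erase a).card = A.card - 1 :=
          fun a ha => Finset.card_erase_of_mem ha
        obtain ⟨W1, hW1, hs1⟩ := ih (A.card - 1) (by omega) (A.erase a1) (hsub a1 ha1)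
          (hcard a1 ha1)
        obtain ⟨W2, hW2, hs2⟩ := ih (A.card - 1) (by omega) (A.erase a2) (hsub a2 ha2)
          (hcard a2 ha2)
        obtain ⟨W3, hW3, hs3⟩ := ih (A.card - 1) (by omega) (A.erase a3) (hsub a3 ha3)
          (hcard a3 ha3)
        -- the median antichain
        set M12 := meetF W1 W2 with hM12def
        set M23 := meetF W2 W3 with hM23def
        set M31 := meetF W3 W1 with hM31def
        set J1 := joinF M12 M23 with hJ1def
        set J := joinF J1 M31 with hJdef
        have hM12 : IsWidthAC M12 := (meet_join_widthAC hW1 hW2).1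
        have hM23 : IsWidthAC M23 := (meet_join_widthAC hW2 hW3).1
        have hM31 : IsWidthAC M31 := (meet_join_widthAC hW3 hW1).1
        have hJ1 : IsWidthAC J1 := (meet_join_widthAC hM12 hM23).2
        have hJ : IsWidthAC J := (meet_join_widthAC hJ1 hM31).2
        refine ⟨J, hJ, fun x hx => ?_⟩
        have hmem : ∀ a ∈ A, ∀ W : Finset α, A.erase a ⊆ W → x ≠ a → x ∈ W :=
          fun a _ W hW hne => hW (Finset.mem_erase.2 ⟨hne, hx⟩)
        -- ACle from each meet up to J
        have up12 : ∀ z ∈ M12, ∃ y ∈ J, z ≤ y := by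
          intro z hz
          obtain ⟨m, hm, h1⟩ := exists_join_above (Finset.mem_union_left M23 hz)
          obtain ⟨y, hy, h2⟩ := exists_join_above (Finset.mem_union_left M31 hm)
          exact ⟨y, hy, h1.trans h2⟩
        have up23 : ∀ z ∈ M23, ∃ y ∈ J, z ≤ y := by
          intro z hz
          obtain ⟨m, hm, h1⟩ := exists_join_above (Finset.mem_union_right M12 hz)
          obtain ⟨y, hy, h2⟩ := exists_join_above (Finset.mem_union_left M31 hm)
          exact ⟨y, hy, h1.trans h2⟩
        have up31 : ∀ z ∈ M31, ∃ y ∈ J, z ≤ y := by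
          intro z hz
          obtain ⟨y, hy, h2⟩ := exists_join_above (Finset.mem_union_right J1 hz)
          exact ⟨y, hy, h2⟩
        -- every element of J lies in one of the three meets
        have hJ_decomp : ∀ z ∈ J, z ∈ M12 ∨ z ∈ M23 ∨ z ∈ M31 := by
          intro z hz
          rcases Finset.mem_union.1 (join_subset_union hz) with h | h
          · rcases Finset.mem_union.1 (join_subset_union h) with h' | h'
            · exact Or.inl h'
            · exact Or.inr (Or.inl h')
          · exact Or.inr (Or.inr h)
        by_cases hx1 : x = a1
        · -- x ∈ W2 ∩ W3, use M23 and joinF W2 W3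
          have hxW2 : x ∈ W2 := hmem a2 ha2 W2 hs2 (by rw [hx1]; exact fun e => h21 e.symm)
          have hxW3 : x ∈ W3 := hmem a3 ha3 W3 hs3 (by rw [hx1]; exact fun e => h31 e.symm)
          have hRw : IsWidthAC (joinF W2 W3) := (meet_join_widthAC hW2 hW3).2
          refine sandwich hRw.1 (mem_meet_common hW2.1 hW3.1 hxW2 hxW3)
            (mem_join_common hW2.1 hW3.1 hxW2 hxW3) up23 ?_
          intro z hz
          rcases hJ_decomp z hz with h | h | h
          · obtain ⟨w, hw, hzw⟩ := exists_le_of_mem_meet_right hW2 h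
            obtain ⟨y, hy, hwy⟩ := exists_join_above (Finset.mem_union_left W3 hw)
            exact ⟨y, hy, hzw.trans hwy⟩
          · obtain ⟨w, hw, hzw⟩ := exists_le_of_mem_meet_left hW2 h
            obtain ⟨y, hy, hwy⟩ := exists_join_above (Finset.mem_union_left W3 hw)
            exact ⟨y, hy, hzw.trans hwy⟩
          · obtain ⟨w, hw, hzw⟩ := exists_le_of_mem_meet_left hW3 h
            obtain ⟨y, hy, hwy⟩ := exists_join_above (Finset.mem_union_right W2 hw)
            exact ⟨y, hy, hzw.trans hwy⟩
        by_cases hx2 : x = a2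
        · -- x ∈ W3 ∩ W1, use M31 and joinF W3 W1
          have hxW3 : x ∈ W3 := hmem a3 ha3 W3 hs3 (by rw [hx2]; exact fun e => h32 e.symm)
          have hxW1 : x ∈ W1 := hmem a1 ha1 W1 hs1 (by rw [hx2]; exact h21)
          have hRw : IsWidthAC (joinF W3 W1) := (meet_join_widthAC hW3 hW1).2
          refine sandwich hRw.1 (mem_meet_common hW3.1 hW1.1 hxW3 hxW1)
            (mem_join_common hW3.1 hW1.1 hxW3 hxW1) up31 ?_
          intro z hz
          rcases hJ_decomp z hz with h | h | h
          · obtain ⟨w, hw, hzw⟩ := exists_le_of_mem_meet_left hW1 h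
            obtain ⟨y, hy, hwy⟩ := exists_join_above (Finset.mem_union_right W3 hw)
            exact ⟨y, hy, hzw.trans hwy⟩
          · obtain ⟨w, hw, hzw⟩ := exists_le_of_mem_meet_right hW3 h
            obtain ⟨y, hy, hwy⟩ := exists_join_above (Finset.mem_union_left W1 hw)
            exact ⟨y, hy, hzw.trans hwy⟩
          · obtain ⟨w, hw, hzw⟩ := exists_le_of_mem_meet_left hW3 h
            obtain ⟨y, hy, hwy⟩ := exists_join_above (Finset.mem_union_left W1 hw)
            exact ⟨y, hy, hzw.trans hwy⟩
        · -- x ∈ W1 ∩ W2, use M12 and joinF W1 W2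
          have hxW1 : x ∈ W1 := hmem a1 ha1 W1 hs1 hx1
          have hxW2 : x ∈ W2 := hmem a2 ha2 W2 hs2 hx2
          have hRw : IsWidthAC (joinF W1 W2) := (meet_join_widthAC hW1 hW2).2
          refine sandwich hRw.1 (mem_meet_common hW1.1 hW2.1 hxW1 hxW2)
            (mem_join_common hW1.1 hW2.1 hxW1 hxW2) up12 ?_
          intro z hz
          rcases hJ_decomp z hz with h | h | h
          · obtain ⟨w, hw, hzw⟩ := exists_le_of_mem_meet_left hW1 h
            obtain ⟨y, hy, hwy⟩ := exists_join_above (Finset.mem_union_left W2 hw)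
            exact ⟨y, hy, hzw.trans hwy⟩
          · obtain ⟨w, hw, hzw⟩ := exists_le_of_mem_meet_left hW2 h
            obtain ⟨y, hy, hwy⟩ := exists_join_above (Finset.mem_union_right W1 hw)
            exact ⟨y, hy, hzw.trans hwy⟩
          · obtain ⟨w, hw, hzw⟩ := exists_le_of_mem_meet_right hW1 h
            obtain ⟨y, hy, hwy⟩ := exists_join_above (Finset.mem_union_left W2 hw)
            exact ⟨y, hy, hzw.trans hwy⟩
    intro A hA
    exact key A.card A hA rfl
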